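/- arXiv:1902.10789 — 4 statements merged into one kernel-verified Lean document; each statement's English description precedes it below -/
import Mathlib

section
/- For every integer n ≥ 1, the set Γ(πⁿ) = {g ∈ GL₂(O) : the (2,1)-entry of g lies in πⁿO} is a subgroup of GL₂(O), and its index in GL₂(O) equals qⁿ⁻¹(q+1). -/
open Matrix IsLocalRing

section Stmt0Aux

variable {O : Type*} [CommRing O] [IsDomain O] [IsDiscreteValuationRing O]

/-- If the top-left entry of `g ∈ GL₂(O)` is not a unit, the bottom-left one is. -/
theorem stmt0_isUnit_c {g : GL (Fin 2) O}
    (h : ¬ IsUnit ((g : Matrix (Fin 2) (Fin 2) O) 0 0)) :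
    IsUnit ((g : Matrix (Fin 2) (Fin 2) O) 1 0) := by
  by_contra hc
  have hdet : IsUnit ((g : Matrix (Fin 2) (Fin 2) O).det) :=
    (Matrix.isUnit_iff_isUnit_det _).mp g.isUnit
  rw [Matrix.det_fin_two] at hdet
  have h1 : (g : Matrix (Fin 2) (Fin 2) O) 0 0 ∈ maximalIdeal O := by
    rwa [mem_maximalIdeal, mem_nonunits_iff]
  have h2 : (g : Matrix (Fin 2) (Fin 2) O) 1 0 ∈ maximalIdeal O := by
    rwa [mem_maximalIdeal, mem_nonunits_iff]
  have : (g : Matrix (Fin 2) (Fin 2) O) 0 0 * (g : Matrix (Fin 2) (Fin 2) O) 1 1 -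
      (g : Matrix (Fin 2) (Fin 2) O) 0 1 * (g : Matrix (Fin 2) (Fin 2) O) 1 0
      ∈ maximalIdeal O :=
    Submodule.sub_mem _ (Ideal.mul_mem_right _ _ h1) (Ideal.mul_mem_left _ _ h2)
  rw [mem_maximalIdeal, mem_nonunits_iff] at this
  exact this hdet

theorem stmt0_exists_t (hπ : Irreducible π) {g : GL (Fin 2) O}
    (h : ¬ IsUnit ((g : Matrix (Fin 2) (Fin 2) O) 0 0)) :
    ∃ t : O, π * t * (g : Matrix (Fin 2) (Fin 2) O) 1 0
      = (g : Matrix (Fin 2) (Fin 2) O) 0 0 := by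
  have ha : (g : Matrix (Fin 2) (Fin 2) O) 0 0 ∈ Ideal.span {π} := by
    rw [← hπ.maximalIdeal_eq, mem_maximalIdeal, mem_nonunits_iff]; exact h
  obtain ⟨s, hs⟩ := Ideal.mem_span_singleton.mp ha
  have hc := stmt0_isUnit_c h
  refine ⟨s * ↑hc.unit⁻¹, ?_⟩
  have h1 : (hc.unit : O) * ↑hc.unit⁻¹ = 1 := hc.unit.mul_inv
  rw [hc.unit_spec] at h1
  calc π * (s * ↑hc.unit⁻¹) * (g : Matrix (Fin 2) (Fin 2) O) 1 0
      = π * s * ((g : Matrix (Fin 2) (Fin 2) O) 1 0 * ↑hc.unit⁻¹) := by ring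
    _ = π * s := by rw [h1, mul_one]
    _ = _ := hs.symm

open scoped Classical in
/-- The invariant of a coset: a point of `P¹(O/πⁿ)` in coordinates. -/
noncomputable def stmt0F (hπ : Irreducible (π : O)) (n : ℕ) (g : GL (Fin 2) O) :
    (O ⧸ Ideal.span {π ^ n}) ⊕ (O ⧸ Ideal.span {π ^ (n - 1)}) :=
  if h : IsUnit ((g : Matrix (Fin 2) (Fin 2) O) 0 0) then
    Sum.inl (Ideal.Quotient.mk _ ((g : Matrix (Fin 2) (Fin 2) O) 1 0 * ↑h.unit⁻¹))
  else
    Sum.inr (Ideal.Quotient.mk _ (Classical.choose (stmt0_exists_t hπ h)))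

theorem stmt0F_eq_iff (hπ : Irreducible (π : O)) {n : ℕ} (hn : 1 ≤ n)
    (g g' : GL (Fin 2) O) :
    stmt0F hπ n g = stmt0F hπ n g' ↔
      π ^ n ∣ ((g : Matrix (Fin 2) (Fin 2) O) 0 0 * (g' : Matrix (Fin 2) (Fin 2) O) 1 0
        - (g : Matrix (Fin 2) (Fin 2) O) 1 0 * (g' : Matrix (Fin 2) (Fin 2) O) 0 0) := by
  set a := (g : Matrix (Fin 2) (Fin 2) O) 0 0 with ha_def
  set c := (g : Matrix (Fin 2) (Fin 2) O) 1 0 with hc_def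
  set a' := (g' : Matrix (Fin 2) (Fin 2) O) 0 0 with ha'_def
  set c' := (g' : Matrix (Fin 2) (Fin 2) O) 1 0 with hc'_def
  have hπ0 : π ≠ 0 := hπ.ne_zero
  have hpow : π * π ^ (n - 1) = π ^ n := by
    conv_rhs => rw [show n = (n - 1) + 1 by omega]
    rw [pow_succ']
  have hπn_mem : π ^ n ∈ maximalIdeal O := by
    rw [← hpow]
    exact Ideal.mul_mem_right _ _ (by rw [mem_maximalIdeal, mem_nonunits_iff]; exact hπ.not_isUnit)
  by_cases ha : IsUnit a <;> by_cases ha' : IsUnit a'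
  · -- both units
    rw [stmt0F, dif_pos ha, stmt0F, dif_pos ha']
    set iu := ((ha.unit⁻¹ : Oˣ) : O) with hiu
    set iv := ((ha'.unit⁻¹ : Oˣ) : O) with hiv
    have hu : a * iu = 1 := ha.mul_val_inv
    have hv : a' * iv = 1 := ha'.mul_val_inv
    rw [Sum.inl.injEq, Ideal.Quotient.eq, Ideal.mem_span_singleton]
    constructor
    · rintro ⟨k, hk⟩
      exact ⟨-(a * a' * k), by linear_combination (-(a * a')) * hk + (c * a') * hu - (a * c') * hv⟩
    · rintro ⟨k, hk⟩
      exact ⟨-(k * iu * iv),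
        by linear_combination (-(iu * iv)) * hk + (c' * iv) * hu - (c * iu) * hv⟩
  · -- a unit, a' not
    rw [stmt0F, dif_pos ha, stmt0F, dif_neg ha']
    simp only [iff_false, reduceCtorEq, false_iff]
    rintro ⟨k, hk⟩
    have hc' : IsUnit c' := stmt0_isUnit_c ha'
    have hmem : a * c' ∈ maximalIdeal O := by
      have : a * c' = c * a' + π ^ n * k := by linear_combination hk
      rw [this]
      exact Submodule.add_mem _
        (Ideal.mul_mem_left _ _ (by rwa [mem_maximalIdeal, mem_nonunits_iff]))
        (Ideal.mul_mem_right _ _ hπn_mem)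
    rw [mem_maximalIdeal, mem_nonunits_iff] at hmem
    exact hmem (ha.mul hc')
  · -- a not unit, a' unit
    rw [stmt0F, dif_neg ha, stmt0F, dif_pos ha']
    simp only [iff_false, reduceCtorEq, false_iff]
    rintro ⟨k, hk⟩
    have hc : IsUnit c := stmt0_isUnit_c ha
    have hmem : c * a' ∈ maximalIdeal O := by
      have : c * a' = a * c' - π ^ n * k := by linear_combination -hk
      rw [this]
      exact Submodule.sub_mem _
        (Ideal.mul_mem_right _ _ (by rwa [mem_maximalIdeal, mem_nonunits_iff]))
        (Ideal.mul_mem_right _ _ hπn_mem)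
    rw [mem_maximalIdeal, mem_nonunits_iff] at hmem
    exact hmem (hc.mul ha')
  · -- both nonunits
    rw [stmt0F, dif_neg ha, stmt0F, dif_neg ha']
    have hc : IsUnit c := stmt0_isUnit_c ha
    have hc' : IsUnit c' := stmt0_isUnit_c ha'
    set t := Classical.choose (stmt0_exists_t hπ ha) with ht_def
    set t' := Classical.choose (stmt0_exists_t hπ ha') with ht'_def
    have ht : π * t * c = a := Classical.choose_spec (stmt0_exists_t hπ ha)
    have ht' : π * t' * c' = a' := Classical.choose_spec (stmt0_exists_t hπ ha')
    rw [Sum.inr.injEq, Ideal.Quotient.eq, Ideal.mem_span_singleton]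
    constructor
    · rintro ⟨k, hk⟩
      exact ⟨c * c' * k,
        by linear_combination (-c') * ht + c * ht' + (π * c * c') * hk + (c * c' * k) * hpow⟩
    · rintro ⟨k, hk⟩
      set ic := ((hc.unit⁻¹ : Oˣ) : O) with hic
      set ic' := ((hc'.unit⁻¹ : Oˣ) : O) with hic'
      have hcu : c * ic = 1 := hc.mul_val_inv
      have hcu' : c' * ic' = 1 := hc'.mul_val_inv
      have hcc : π * (c * c' * (t - t')) = π * (π ^ (n - 1) * k) := by
        linear_combination c' * ht - c * ht' + hk - k * hpow
      have hcc2 : c * c' * (t - t') = π ^ (n - 1) * k := mul_left_cancel₀ hπ0 hcc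
      exact ⟨k * ic * ic',
        by linear_combination (ic * ic') * hcc2 - ((t - t') * (c' * ic')) * hcu
          - (t - t') * hcu'⟩

theorem stmt0_key (hπ : Irreducible (π : O)) {n : ℕ} (hn : 1 ≤ n) (x y : GL (Fin 2) O) :
    ((x⁻¹ * y : GL (Fin 2) O) : Matrix (Fin 2) (Fin 2) O) 1 0 ∈ Ideal.span {π ^ n} ↔
      stmt0F hπ n x = stmt0F hπ n y := by
  rw [stmt0F_eq_iff hπ hn, Ideal.mem_span_singleton]
  set X := (x : Matrix (Fin 2) (Fin 2) O) with hX
  set Y := (y : Matrix (Fin 2) (Fin 2) O) with hY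
  set K := ((x⁻¹ * y : GL (Fin 2) O) : Matrix (Fin 2) (Fin 2) O) with hK
  have hXK : X * K = Y := by
    rw [hX, hK, hY, ← Units.val_mul, mul_inv_cancel_left]
  have hY00 : Y 0 0 = X 0 0 * K 0 0 + X 0 1 * K 1 0 := by
    rw [← hXK, Matrix.mul_apply, Fin.sum_univ_two]
  have hY10 : Y 1 0 = X 1 0 * K 0 0 + X 1 1 * K 1 0 := by
    rw [← hXK, Matrix.mul_apply, Fin.sum_univ_two]
  have hdet : IsUnit X.det := (Matrix.isUnit_iff_isUnit_det _).mp x.isUnit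
  obtain ⟨u, hu⟩ := hdet
  have hu' : (u : O) = X 0 0 * X 1 1 - X 0 1 * X 1 0 := by rw [hu, Matrix.det_fin_two]
  have hiden : X 0 0 * Y 1 0 - X 1 0 * Y 0 0 = (u : O) * K 1 0 := by
    linear_combination X 0 0 * hY10 - X 1 0 * hY00 - K 1 0 * hu'
  constructor
  · rintro ⟨k, hk⟩
    exact ⟨(u : O) * k, by rw [hiden, hk]; ring⟩
  · rintro ⟨k, hk⟩
    refine ⟨(↑u⁻¹ : O) * k, ?_⟩
    have h2 : (↑u⁻¹ : O) * ((u : O) * K 1 0) = K 1 0 := by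
      rw [← mul_assoc, u.inv_mul, one_mul]
    rw [← h2, ← hiden, hk]; ring

theorem stmt0_surj (hπ : Irreducible (π : O)) (n : ℕ) :
    Function.Surjective (stmt0F hπ n) := by
  rintro (x | x)
  · obtain ⟨r, rfl⟩ := Ideal.Quotient.mk_surjective x
    set g : GL (Fin 2) O := ⟨!![1, 0; r, 1], !![1, 0; -r, 1], by
        rw [Matrix.mul_fin_two, Matrix.one_fin_two]; norm_num, by
        rw [Matrix.mul_fin_two, Matrix.one_fin_two]; norm_num⟩ with hg
    refine ⟨g, ?_⟩
    have hent : (g : Matrix (Fin 2) (Fin 2) O) = !![1, 0; r, 1] := rfl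
    have h00 : (g : Matrix (Fin 2) (Fin 2) O) 0 0 = 1 := by rw [hent]; simp
    have h10 : (g : Matrix (Fin 2) (Fin 2) O) 1 0 = r := by rw [hent]; simp
    have h : IsUnit ((g : Matrix (Fin 2) (Fin 2) O) 0 0) := h00 ▸ isUnit_one
    rw [stmt0F, dif_pos h]
    congr 1
    have h2 : h.unit = 1 := Units.ext (h.unit_spec.trans h00)
    have hiu : ((h.unit⁻¹ : Oˣ) : O) = 1 := by rw [h2]; rfl
    rw [h10, hiu, mul_one]
  · obtain ⟨r, rfl⟩ := Ideal.Quotient.mk_surjective x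
    refine ⟨⟨!![π * r, -1; 1, 0], !![0, 1; -1, π * r], ?_, ?_⟩, ?_⟩
    · rw [Matrix.mul_fin_two, Matrix.one_fin_two]; norm_num
    · rw [Matrix.mul_fin_two, Matrix.one_fin_two]; norm_num
    · set g : GL (Fin 2) O := ⟨!![π * r, -1; 1, 0], !![0, 1; -1, π * r], by
        rw [Matrix.mul_fin_two, Matrix.one_fin_two]; norm_num, by
        rw [Matrix.mul_fin_two, Matrix.one_fin_two]; norm_num⟩ with hg
      have hent : (g : Matrix (Fin 2) (Fin 2) O) = !![π * r, -1; 1, 0] := rfl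
      have h00 : (g : Matrix (Fin 2) (Fin 2) O) 0 0 = π * r := by rw [hent]; simp
      have h10 : (g : Matrix (Fin 2) (Fin 2) O) 1 0 = 1 := by rw [hent]; simp
      have hnu : ¬ IsUnit ((g : Matrix (Fin 2) (Fin 2) O) 0 0) := by
        rw [h00]
        intro hu
        exact hπ.not_isUnit (isUnit_of_mul_isUnit_left hu)
      rw [stmt0F, dif_neg hnu]
      have ht := Classical.choose_spec (stmt0_exists_t hπ hnu)
      set tt := Classical.choose (stmt0_exists_t hπ hnu) with htt
      have h3 : π * tt * ((g : Matrix (Fin 2) (Fin 2) O) 1 0) = π * tt * 1 :=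
        congrArg (fun z => π * tt * z) h10
      have h4 : π * tt = π * r := by
        rw [mul_one] at h3
        rw [← h3, ht, h00]
      have h5 : tt = r := mul_left_cancel₀ hπ.ne_zero h4
      rw [h5]

end Stmt0Aux
/-- Let `O` be a discrete valuation ring with uniformizer `π` whose residue
field is finite of cardinality `q`. For every integer `n ≥ 1`, the set
`Γ(πⁿ) = {g ∈ GL₂(O) : g 2 1 ∈ πⁿO}` is a subgroup of `GL₂(O)` whose index equals
`qⁿ⁻¹ (q + 1)`. -/
theorem stmt0 (O : Type*) [CommRing O] [IsDomain O] [IsDiscreteValuationRing O]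
    (π : O) (hπ : Irreducible π)
    (q : ℕ) [Finite (IsLocalRing.ResidueField O)]
    (hq : Nat.card (IsLocalRing.ResidueField O) = q)
    (n : ℕ) (hn : 1 ≤ n) :
    ∃ Γ : Subgroup (GL (Fin 2) O),
      (Γ : Set (GL (Fin 2) O)) =
        {g : GL (Fin 2) O | (g : Matrix (Fin 2) (Fin 2) O) 1 0 ∈ Ideal.span {π ^ n}} ∧
      Γ.index = q ^ (n - 1) * (q + 1) := by
  set I : Ideal O := Ideal.span {π ^ n} with hI
  -- membership in `I` implies membership in the maximal ideal
  have hIm : I ≤ maximalIdeal O := by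
    rw [hI, Ideal.span_le, Set.singleton_subset_iff]
    have hpow : π * π ^ (n - 1) = π ^ n := by
      conv_rhs => rw [show n = (n - 1) + 1 by omega]
      rw [pow_succ']
    rw [SetLike.mem_coe, ← hpow]
    exact Ideal.mul_mem_right _ _
      (by rw [mem_maximalIdeal, mem_nonunits_iff]; exact hπ.not_isUnit)
  -- now the index computation
  have hq0 : 0 < q := by
    rw [← hq]; exact Nat.card_pos
  have hcard : ∀ k : ℕ, Nat.card (O ⧸ Ideal.span {π ^ k}) = q ^ k := by
    intro k
    have h1 : Ideal.span {π ^ k} = (maximalIdeal O) ^ k := by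
      rw [hπ.maximalIdeal_eq, Ideal.span_singleton_pow]
    have h2 : Submodule.cardQuot ((maximalIdeal O) ^ k) = Submodule.cardQuot (maximalIdeal O) ^ k :=
      cardQuot_pow_of_prime (IsDiscreteValuationRing.not_a_field O)
    have h3 : Submodule.cardQuot (maximalIdeal O) = q := by
      rw [Submodule.cardQuot_apply]
      exact hq
    rw [h1, ← Submodule.cardQuot_apply, h2, h3]
  have hfinI : Finite (O ⧸ Ideal.span {π ^ n}) :=
    (Nat.card_pos_iff.mp (by rw [hcard n]; exact pow_pos hq0 n)).2
  have hfinJ : Finite (O ⧸ Ideal.span {π ^ (n - 1)}) :=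
    (Nat.card_pos_iff.mp (by rw [hcard (n - 1)]; exact pow_pos hq0 (n - 1))).2
  -- the coset space is in bijection with `P¹(O/πⁿ)`
  have main : ∀ Γ : Subgroup (GL (Fin 2) O),
      (∀ g : GL (Fin 2) O, g ∈ Γ ↔ (g : Matrix (Fin 2) (Fin 2) O) 1 0 ∈ I) →
      Γ.index = q ^ (n - 1) * (q + 1) := by
    intro Γ hΓ
    rw [Subgroup.index]
    have hsound : ∀ a b : GL (Fin 2) O, (QuotientGroup.leftRel Γ) a b →
        stmt0F hπ n a = stmt0F hπ n b := by
      intro a b h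
      rw [QuotientGroup.leftRel_apply] at h
      exact (stmt0_key hπ hn a b).mp ((hΓ _).mp h)
    set F : (GL (Fin 2) O ⧸ Γ) →
        ((O ⧸ Ideal.span {π ^ n}) ⊕ (O ⧸ Ideal.span {π ^ (n - 1)})) :=
      Quotient.lift (stmt0F hπ n) hsound with hF
    have hinj : Function.Injective F := by
      intro x y
      induction x using QuotientGroup.induction_on with | H a =>
      induction y using QuotientGroup.induction_on with | H b =>
      intro h
      rw [QuotientGroup.eq]
      exact (hΓ _).mpr ((stmt0_key hπ hn a b).mpr h)
    have hsurj : Function.Surjective F := by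
      intro s
      obtain ⟨g, hg⟩ := stmt0_surj hπ n s
      exact ⟨QuotientGroup.mk g, hg⟩
    rw [Nat.card_congr (Equiv.ofBijective F ⟨hinj, hsurj⟩), Nat.card_sum, hcard n,
      hcard (n - 1)]
    have h5 : q ^ n = q ^ (n - 1) * q := by
      conv_lhs => rw [show n = (n - 1) + 1 by omega]
      rw [pow_succ]
    rw [h5, Nat.mul_add, mul_one]
  -- the subgroup
  refine ⟨{
    carrier := {g : GL (Fin 2) O | (g : Matrix (Fin 2) (Fin 2) O) 1 0 ∈ I}
    one_mem' := by
      show ((1 : GL (Fin 2) O) : Matrix (Fin 2) (Fin 2) O) 1 0 ∈ I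
      have : ((1 : GL (Fin 2) O) : Matrix (Fin 2) (Fin 2) O) 1 0 = 0 := by
        rw [Units.val_one, Matrix.one_apply_ne (by decide)]
      rw [this]; exact I.zero_mem
    mul_mem' := by
      intro x y hx hy
      show ((x * y : GL (Fin 2) O) : Matrix (Fin 2) (Fin 2) O) 1 0 ∈ I
      rw [Units.val_mul, Matrix.mul_apply, Fin.sum_univ_two]
      exact I.add_mem (I.mul_mem_right _ hx) (I.mul_mem_left _ hy)
    inv_mem' := by
      intro x hx
      show ((x⁻¹ : GL (Fin 2) O) : Matrix (Fin 2) (Fin 2) O) 1 0 ∈ I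
      have hx' : (x : Matrix (Fin 2) (Fin 2) O) 1 0 ∈ I := hx
      -- the (0,0) entry of x is a unit, since the (1,0) entry is not
      have ha : IsUnit ((x : Matrix (Fin 2) (Fin 2) O) 0 0) := by
        by_contra ha
        have hc := stmt0_isUnit_c ha
        have := hIm hx'
        rw [mem_maximalIdeal, mem_nonunits_iff] at this
        exact this hc
      have hXK : (x⁻¹ : GL (Fin 2) O).val * (x : GL (Fin 2) O).val = 1 := by
        rw [← Units.val_mul, inv_mul_cancel, Units.val_one]
      have h10 : ((x⁻¹ : GL (Fin 2) O) : Matrix (Fin 2) (Fin 2) O) 1 0 *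
            (x : Matrix (Fin 2) (Fin 2) O) 0 0 +
          ((x⁻¹ : GL (Fin 2) O) : Matrix (Fin 2) (Fin 2) O) 1 1 *
            (x : Matrix (Fin 2) (Fin 2) O) 1 0 = 0 := by
        have := congrFun (congrFun hXK 1) 0
        rwa [Matrix.mul_apply, Fin.sum_univ_two, Matrix.one_apply_ne (by decide)] at this
      have key : ((x⁻¹ : GL (Fin 2) O) : Matrix (Fin 2) (Fin 2) O) 1 0 =
          (-(((x⁻¹ : GL (Fin 2) O) : Matrix (Fin 2) (Fin 2) O) 1 1 *
            (x : Matrix (Fin 2) (Fin 2) O) 1 0)) * ↑ha.unit⁻¹ := by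
        have hu : (x : Matrix (Fin 2) (Fin 2) O) 0 0 * ↑ha.unit⁻¹ = 1 := ha.mul_val_inv
        linear_combination (↑ha.unit⁻¹ : O) * h10 -
          ((x⁻¹ : GL (Fin 2) O) : Matrix (Fin 2) (Fin 2) O) 1 0 * hu
      rw [key]
      exact I.mul_mem_right _ (I.neg_mem (I.mul_mem_left _ hx'))
  }, rfl, main _ (fun g => Iff.rfl)⟩
end

section
/- Assume n ∈ πᵘO, and assume either (i) u ≥ 1 and t ∈ m, or (ii) the reduction of X² − tX + n modulo m is irreducible over the residue field O/m. Then every g ∈ GL₂(O) whose (2,1)-entry lies in πᵘO factors uniquely as g = l·h, where l = [[1, 0], [c, d]] with c ∈ πᵘO and d ∈ O×, and h = [[a, b], [−nb, a + tb]] with a² + tab + nb² ∈ O×. (Equivalently: Γ(πᵘ) = Γ₀(πᵘ)·H with Γ₀(πᵘ) ∩ H trivial, where Γ₀(πᵘ) is the set of matrices [[1,0],[c,d]] ∈ GL₂(O) with c ∈ πᵘO, and H is the set of matrices [[a, b], [−nb, a + tb]] with a² + tab + nb² ∈ O×.) -/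
open Polynomial

/-- Let `O` be a DVR with maximal ideal `m` and uniformizer `π`, let
`u ≥ 0`, `t n ∈ O` with `n ∈ πᵘO`, and assume either (i) `u ≥ 1` and `t ∈ m`, or (ii) the
reduction of `X² − tX + n` mod `m` is irreducible over the residue field.  Then every
`g ∈ GL₂(O)` whose `(2,1)`-entry lies in `πᵘO` factors uniquely as `g = l·h` with
`l = [[1,0],[c,d]]`, `c ∈ πᵘO`, `d ∈ O×`, and `h = [[a,b],[−nb, a+tb]]` with
`a² + tab + nb² ∈ O×`. -/
theorem stmt3 (O : Type*) [CommRing O] [IsDomain O] [IsDiscreteValuationRing O]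
    (π : O) (hπ : Irreducible π) (u : ℕ) (t n : O)
    (hn : n ∈ Ideal.span {π ^ u})
    (hcase : (1 ≤ u ∧ t ∈ IsLocalRing.maximalIdeal O) ∨
      Irreducible ((X ^ 2 - C t * X + C n).map (IsLocalRing.residue O))) :
    ∀ g : GL (Fin 2) O, (g : Matrix (Fin 2) (Fin 2) O) 1 0 ∈ Ideal.span {π ^ u} →
      ∃! lh : Matrix (Fin 2) (Fin 2) O × Matrix (Fin 2) (Fin 2) O,
        (∃ c d : O, lh.1 = !![1, 0; c, d] ∧ c ∈ Ideal.span {π ^ u} ∧ IsUnit d) ∧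
        (∃ a b : O, lh.2 = !![a, b; -(n * b), a + t * b] ∧
          IsUnit (a ^ 2 + t * a * b + n * b ^ 2)) ∧
        (g : Matrix (Fin 2) (Fin 2) O) = lh.1 * lh.2 := by
  intro g hg
  set M : Matrix (Fin 2) (Fin 2) O := ↑g with hM
  set A := M 0 0 with hA
  set B := M 0 1 with hB
  set C' := M 1 0 with hC'
  set D := M 1 1 with hD
  have hdetM : IsUnit M.det := (Matrix.isUnit_iff_isUnit_det M).mp g.isUnit
  have hdet : IsUnit (A * D - B * C') := by rwa [Matrix.det_fin_two] at hdetM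
  have hQ : IsUnit (A ^ 2 + t * A * B + n * B ^ 2) := by
    by_contra h0
    have hmem : A ^ 2 + t * A * B + n * B ^ 2 ∈ IsLocalRing.maximalIdeal O :=
      IsLocalRing.mem_maximalIdeal _ |>.mpr h0
    rcases hcase with ⟨hu, ht⟩ | hirr
    · have hπm : π ∈ IsLocalRing.maximalIdeal O :=
        IsLocalRing.mem_maximalIdeal _ |>.mpr hπ.not_isUnit
      have hspan : Ideal.span {π ^ u} ≤ IsLocalRing.maximalIdeal O := by
        rw [Ideal.span_singleton_le_iff_mem]
        obtain ⟨v, rfl⟩ : ∃ v, u = 1 + v := ⟨u - 1, by omega⟩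
        rw [pow_add, pow_one]
        exact Ideal.mul_mem_right _ _ hπm
      have hnm := hspan hn
      have hCm := hspan hg
      have hA2 : A ^ 2 ∈ IsLocalRing.maximalIdeal O := by
        have h : A ^ 2 = (A ^ 2 + t * A * B + n * B ^ 2) - (t * (A * B) + n * B ^ 2) := by
          ring
        rw [h]
        exact Ideal.sub_mem _ hmem
          (Ideal.add_mem _ (Ideal.mul_mem_right _ _ ht) (Ideal.mul_mem_right _ _ hnm))
      have hAm : A ∈ IsLocalRing.maximalIdeal O :=
        (IsLocalRing.maximalIdeal.isMaximal O).isPrime.mem_of_pow_mem 2 hA2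
      have hd : A * D - B * C' ∈ IsLocalRing.maximalIdeal O :=
        Ideal.sub_mem _ (Ideal.mul_mem_right _ _ hAm) (Ideal.mul_mem_left _ _ hCm)
      exact ((IsLocalRing.mem_maximalIdeal _).mp hd) hdet
    · set r := IsLocalRing.residue O with hr
      have hrQ : r A ^ 2 + r t * r A * r B + r n * r B ^ 2 = 0 := by
        have h : r (A ^ 2 + t * A * B + n * B ^ 2) = 0 :=
          Ideal.Quotient.eq_zero_iff_mem.mpr hmem
        simpa [map_add, map_mul, map_pow] using h
      by_cases hB0 : r B = 0
      · have hA0 : r A = 0 := by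
          have h2 : r A ^ 2 = 0 := by simpa [hB0] using hrQ
          exact pow_eq_zero_iff (by norm_num : (2:ℕ) ≠ 0) |>.mp h2
        have hu : IsUnit (r (A * D - B * C')) := hdet.map r
        rw [map_sub, map_mul, map_mul, hA0, hB0] at hu
        exact hu.ne_zero (by ring)
      · set x : IsLocalRing.ResidueField O := -(r A) / (r B) with hx
        have hmap : (X ^ 2 - C t * X + C n).map r = X ^ 2 - C (r t) * X + C (r n) := by
          simp [Polynomial.map_add, Polynomial.map_sub, Polynomial.map_mul,
            Polynomial.map_pow]
        have hroot : ((X ^ 2 - C t * X + C n).map r).IsRoot x := by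
          rw [hmap]
          simp only [Polynomial.IsRoot, eval_add, eval_sub, eval_mul, eval_pow, eval_X,
            eval_C]
          have key : x * r B = -r A := by
            rw [hx]; field_simp
          have h2 : (x ^ 2 - r t * x + r n) * r B ^ 2 = 0 := by
            calc (x ^ 2 - r t * x + r n) * r B ^ 2
                = (x * r B) ^ 2 - r t * (x * r B) * r B + r n * r B ^ 2 := by ring
              _ = (-r A) ^ 2 - r t * (-r A) * r B + r n * r B ^ 2 := by rw [key]
              _ = 0 := by linear_combination hrQ
          exact (mul_eq_zero.mp h2).resolve_right (pow_ne_zero 2 hB0)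
        obtain ⟨q, hq⟩ := Polynomial.dvd_iff_isRoot.mpr hroot
        rcases hirr.isUnit_or_isUnit hq with h1 | h2
        · exact Polynomial.not_isUnit_X_sub_C x h1
        · have hdq : q.natDegree = 0 := Polynomial.natDegree_eq_zero_of_isUnit h2
          have hdp : ((X ^ 2 - C t * X + C n).map r).natDegree = 2 := by
            rw [hmap]; compute_degree!
          rw [hq, Polynomial.natDegree_mul (Polynomial.X_sub_C_ne_zero x) h2.ne_zero,
            Polynomial.natDegree_X_sub_C, hdq] at hdp
          omega
  set e : O := ↑hQ.unit⁻¹ with he_def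
  have he : (A ^ 2 + t * A * B + n * B ^ 2) * e = 1 := hQ.mul_val_inv
  refine ⟨(!![1, 0; ((A + t * B) * C' + n * (B * D)) * e,
      (A * D - B * C') * e], !![A, B; -(n * B), A + t * B]),
    ⟨⟨_, _, rfl, ?_, ?_⟩, ⟨A, B, rfl, hQ⟩, ?_⟩, ?_⟩
  · have h : ((A + t * B) * C' + n * (B * D)) * e
        = (A + t * B) * e * C' + B * D * e * n := by ring
    rw [h]
    exact Ideal.add_mem _ (Ideal.mul_mem_left _ _ hg) (Ideal.mul_mem_left _ _ hn)
  · exact hdet.mul hQ.unit⁻¹.isUnit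
  · have hMe : M = !![A, B; C', D] := Matrix.eta_fin_two M
    rw [hMe, Matrix.mul_fin_two]
    ext i j
    fin_cases i <;> fin_cases j <;> simp
    · linear_combination (-C') * he
    · linear_combination (-D) * he
  · rintro ⟨l', h'⟩ ⟨⟨c', d', rfl, hc', hd'⟩, ⟨a', b', rfl, hQ'⟩, hf'⟩
    rw [Matrix.mul_fin_two] at hf'
    have ha' : A = a' := by simpa using congrFun (congrFun hf' 0) 0
    have hb' : B = b' := by simpa using congrFun (congrFun hf' 0) 1
    subst ha'; subst hb'
    have e10 : c' * A + d' * (-(n * B)) = C' := by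
      simpa using (congrFun (congrFun hf' 1) 0).symm
    have e11 : c' * B + d' * (A + t * B) = D := by
      simpa using (congrFun (congrFun hf' 1) 1).symm
    have hcc : c' = ((A + t * B) * C' + n * (B * D)) * e :=
      hQ.mul_left_cancel (by
        linear_combination (A + t * B) * e10 + (n * B) * e11
          - ((A + t * B) * C' + n * (B * D)) * he)
    have hdd : d' = (A * D - B * C') * e :=
      hQ.mul_left_cancel (by
        linear_combination (-B) * e10 + A * e11 - (A * D - B * C') * he)
    subst hcc; subst hdd
    rfl
end

section
/- Let a, b be central elements of D, let γ₋ ∈ D satisfy γ₋μ = μ̄γ₋, and set γ₊ := a + bμ, γ := γ₊ + γ₋, and γ̄ := a + bμ̄ − γ₋. Then γ·(μ − μ̄)·γ₋ = (μ − μ̄)·γ₋·γ̄. Consequently, if v is a multiplicative absolute value on D and γ₋ ≠ 0, then v(γ̄) = v(γ). -/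
/-- Let `D` be a division ring, `t n` central, `μ² = tμ − n`,
`μ̄ := t − μ ≠ μ`.  Let `a b` be central, `γ₋` satisfy `γ₋μ = μ̄γ₋`, and set
`γ₊ := a + bμ`, `γ := γ₊ + γ₋`, `γ̄ := a + bμ̄ − γ₋`.  Then
`γ·(μ − μ̄)·γ₋ = (μ − μ̄)·γ₋·γ̄`; consequently, if `v` is a multiplicative absolute value
on `D` and `γ₋ ≠ 0`, then `v(γ̄) = v(γ)`. -/
theorem stmt8 (D : Type*) [DivisionRing D] (t n : D)
    (ht : t ∈ Subring.center D) (hn : n ∈ Subring.center D)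
    (μ : D) (hμ : μ ^ 2 = t * μ - n) (hne : t - μ ≠ μ)
    (a b : D) (ha : a ∈ Subring.center D) (hb : b ∈ Subring.center D)
    (γm : D) (hγm : γm * μ = (t - μ) * γm) :
    (a + b * μ + γm) * ((μ - (t - μ)) * γm) =
      (μ - (t - μ)) * γm * (a + b * (t - μ) - γm) ∧
    ∀ v : D → ℝ, (∀ x : D, v x = 0 ↔ x = 0) → (∀ x y : D, v (x * y) = v x * v y) →
      γm ≠ 0 → v (a + b * (t - μ) - γm) = v (a + b * μ + γm) := by
  have ht' := Subring.mem_center_iff.mp ht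
  have ha' := Subring.mem_center_iff.mp ha
  have hb' := Subring.mem_center_iff.mp hb
  -- γm * (t - μ) = μ * γm
  have f2 : γm * (t - μ) = μ * γm := by
    rw [mul_sub, hγm, ht' γm]; noncomm_ring
  -- γm anticommutes with δ := μ - (t - μ)
  have f3 : γm * (μ - (t - μ)) = -((μ - (t - μ)) * γm) := by
    rw [mul_sub, hγm, f2]; noncomm_ring
  -- μ commutes with δ
  have f4 : μ * (μ - (t - μ)) = (μ - (t - μ)) * μ := by
    have h := ht' μ
    rw [mul_sub, sub_mul, mul_sub, sub_mul, h]
  have h5 : γm * (b * (t - μ)) = b * (μ * γm) := by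
    rw [← mul_assoc, hb' γm, mul_assoc, f2]
  have h7 : (μ - (t - μ)) * (b * (μ * γm)) = b * ((μ - (t - μ)) * (μ * γm)) := by
    rw [← mul_assoc, hb' (μ - (t - μ)), mul_assoc]
  have key : (a + b * μ + γm) * ((μ - (t - μ)) * γm) =
      (μ - (t - μ)) * γm * (a + b * (t - μ) - γm) := by
    have e1 : (a + b * μ + γm) * ((μ - (t - μ)) * γm) =
        a * ((μ - (t - μ)) * γm) + b * ((μ * (μ - (t - μ))) * γm)
          + (γm * (μ - (t - μ))) * γm := by noncomm_ring
    have e2 : (μ - (t - μ)) * γm * (a + b * (t - μ) - γm) =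
        ((μ - (t - μ)) * γm) * a + (μ - (t - μ)) * (γm * (b * (t - μ)))
          - (μ - (t - μ)) * (γm * γm) := by noncomm_ring
    rw [e1, e2, ha' ((μ - (t - μ)) * γm), h5, h7, f4, f3]
    noncomm_ring
  refine ⟨key, fun v hv0 hvmul hγ => ?_⟩
  have hδ : μ - (t - μ) ≠ 0 := sub_ne_zero_of_ne hne.symm
  have hc : v ((μ - (t - μ)) * γm) ≠ 0 := by
    rw [hvmul]
    exact mul_ne_zero (fun h => hδ ((hv0 _).mp h)) (fun h => hγ ((hv0 _).mp h))
  have h1 := congrArg v key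
  rw [hvmul (a + b * μ + γm) ((μ - (t - μ)) * γm),
    hvmul ((μ - (t - μ)) * γm) (a + b * (t - μ) - γm)] at h1
  rw [mul_comm] at h1
  exact (mul_left_cancel₀ hc h1).symm
end

section
/- The normalizer of K× in D× equals (D⁺ ∪ D⁻) ∖ {0}: a nonzero γ ∈ D satisfies γkγ⁻¹ ∈ K for all nonzero k ∈ K if and only if γμ = μγ or γμ = μ̄γ. -/
/-- Let `F` be a field, `D` a division ring that is an `F`-algebra,
`t n ∈ F`, `μ ∈ D` with `μ² = tμ − n·1`, `μ̄ := t·1 − μ ≠ μ`, and `K := F·1 + F·μ`.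
The normalizer of `K×` in `D×` equals `(D⁺ ∪ D⁻) ∖ {0}`: a nonzero `γ ∈ D` satisfies
`γkγ⁻¹ ∈ K` for all nonzero `k ∈ K` if and only if `γμ = μγ` or `γμ = μ̄γ`. -/
theorem stmt10 (F : Type*) [Field F] (D : Type*) [DivisionRing D] [Algebra F D]
    (t n : F) (μ : D)
    (hμ : μ ^ 2 = algebraMap F D t * μ - algebraMap F D n)
    (hne : algebraMap F D t - μ ≠ μ) :
    ∀ γ : D, γ ≠ 0 →
      ((∀ k : D, (∃ a b : F, k = algebraMap F D a + algebraMap F D b * μ) → k ≠ 0 →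
          ∃ a b : F, γ * k * γ⁻¹ = algebraMap F D a + algebraMap F D b * μ) ↔
        (γ * μ = μ * γ ∨ γ * μ = (algebraMap F D t - μ) * γ)) := by
  intro γ hγ
  set A := algebraMap F D with hA
  constructor
  · intro h
    by_cases hμ0 : μ = 0
    · left; simp [hμ0]
    · obtain ⟨a, b, hab⟩ := h μ ⟨0, 1, by simp⟩ hμ0
      set x := γ * μ * γ⁻¹ with hx
      have hxμ : x * μ = μ * x := by
        rw [hab, add_mul, mul_add, mul_assoc, ← Algebra.commutes a μ,
          ← mul_assoc μ (A b) μ, ← Algebra.commutes b μ, mul_assoc]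
      have hμ2 : μ * μ = A t * μ - A n := by rw [← sq]; exact hμ
      have e1 : γ * (A t * μ) = A t * (γ * μ) := by
        rw [← mul_assoc, ← Algebra.commutes t γ, mul_assoc]
      have e2 : γ * A n = A n * γ := (Algebra.commutes n γ).symm
      have hsq : x * x = A t * x - A n := by
        calc x * x = γ * (μ * μ) * γ⁻¹ := by
              rw [hx]; simp [mul_assoc, inv_mul_cancel_left₀ hγ]
          _ = (A t * (γ * μ) - A n * γ) * γ⁻¹ := by rw [hμ2, mul_sub, e1, e2]
          _ = A t * x - A n := by
              rw [sub_mul, hx, mul_assoc (A t), mul_assoc (A n), mul_inv_cancel₀ hγ, mul_one]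
      have hct : x * A t = A t * x := (Algebra.commutes t x).symm
      have key : (x - μ) * (x - (A t - μ)) = 0 := by
        have e3 : (x - μ) * (x - (A t - μ)) =
            x * x - x * A t + x * μ - μ * x + μ * A t - μ * μ := by noncomm_ring
        rw [e3, hsq, hμ2, hct, Algebra.commutes t μ, hxμ]
        abel
      rcases mul_eq_zero.mp key with h1 | h1
      · left
        have hxe : x = μ := sub_eq_zero.mp h1
        calc γ * μ = γ * μ * γ⁻¹ * γ := by rw [mul_assoc, inv_mul_cancel₀ hγ, mul_one]
          _ = μ * γ := by rw [← hx, hxe]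
      · right
        have hxe : x = A t - μ := sub_eq_zero.mp h1
        calc γ * μ = γ * μ * γ⁻¹ * γ := by rw [mul_assoc, inv_mul_cancel₀ hγ, mul_one]
          _ = (A t - μ) * γ := by rw [← hx, hxe]
  · rintro h k ⟨a, b, rfl⟩ hk0
    rcases h with h | h
    · refine ⟨a, b, ?_⟩
      have hcom : γ * (A a + A b * μ) = (A a + A b * μ) * γ := by
        rw [mul_add, add_mul, ← Algebra.commutes a γ, ← mul_assoc γ (A b) μ,
          ← Algebra.commutes b γ, mul_assoc, h, ← mul_assoc]
      rw [hcom, mul_assoc, mul_inv_cancel₀ hγ, mul_one]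
    · refine ⟨a + b * t, -b, ?_⟩
      have hcom : γ * (A a + A b * μ) = (A (a + b * t) + A (-b) * μ) * γ := by
        rw [mul_add, ← Algebra.commutes a γ, ← mul_assoc γ (A b) μ,
          ← Algebra.commutes b γ, mul_assoc, h, map_add, map_mul, map_neg]
        noncomm_ring
      rw [hcom, mul_assoc, mul_inv_cancel₀ hγ, mul_one]
end
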